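/- For a cyclic group H of order pq with p, q distinct primes and generator h, the ideal of ℤ[H] generated by φ₁(h)·φ_p(h)·φ_q(h) (product of cyclotomic polynomials evaluated at h) satisfies I_H · J = J, where I_H is the augmentation ideal. -/

import Mathlib

open Polynomial

lemma divisors_mul_primes {p q : ℕ} (hp : p.Prime) (hq : q.Prime) (hpq : p ≠ q) :
    (p * q).divisors = {1, p, q, p * q} := by
  rw [Nat.divisors_mul, hp.divisors, hq.divisors]
  ext d
  simp only [Finset.mem_mul, Finset.mem_insert, Finset.mem_singleton]
  constructor
  · rintro ⟨a, (rfl | rfl), b, (rfl | rfl), rfl⟩ <;> simp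
  · rintro (rfl | rfl | rfl | rfl)
    · exact ⟨1, Or.inl rfl, 1, Or.inl rfl, one_mul 1⟩
    · exact ⟨_, Or.inr rfl, 1, Or.inl rfl, mul_one _⟩
    · exact ⟨1, Or.inl rfl, _, Or.inr rfl, one_mul _⟩
    · exact ⟨_, Or.inr rfl, _, Or.inr rfl, rfl⟩

lemma cyclotomic_prod_pq {p q : ℕ} (hp : p.Prime) (hq : q.Prime) (hpq : p ≠ q) :
    cyclotomic 1 ℤ * cyclotomic p ℤ * cyclotomic q ℤ * cyclotomic (p * q) ℤ
      = X ^ (p * q) - 1 := by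
  have hpos : 0 < p * q := Nat.mul_pos hp.pos hq.pos
  rw [← prod_cyclotomic_eq_X_pow_sub_one hpos ℤ, divisors_mul_primes hp hq hpq]
  have h1p : (1 : ℕ) ≠ p := fun e => by have := hp.two_le; omega
  have hppq : p ≠ p * q := fun e => by
    nlinarith [hp.two_le, hq.two_le, hp.one_lt]
  have hqpq : q ≠ p * q := fun e => by nlinarith [hp.two_le, hq.two_le]
  have h1q : (1 : ℕ) ≠ q := fun e => by have := hq.two_le; omega
  have h1pq : (1 : ℕ) ≠ p * q := by
    have := hp.two_le; have := hq.two_le; nlinarith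
  rw [Finset.prod_insert (by simp [h1p, h1q, h1pq]),
    Finset.prod_insert (by simp [hpq, hppq]),
    Finset.prod_insert (by simp [hqpq]), Finset.prod_singleton]
  ring

lemma not_isPrimePow_mul {p q : ℕ} (hp : p.Prime) (hq : q.Prime) (hpq : p ≠ q) :
    ¬ IsPrimePow (p * q) := by
  rintro ⟨r, k, hr, hk, hn⟩
  have hrp : r.Prime := hr.nat_prime
  have hpd : p ∣ r ^ k := hn ▸ ⟨q, rfl⟩
  have hqd : q ∣ r ^ k := hn ▸ ⟨p, mul_comm p q⟩
  have h1 : p = r := (Nat.prime_dvd_prime_iff_eq hp hrp).mp (hp.dvd_of_dvd_pow hpd)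
  have h2 : q = r := (Nat.prime_dvd_prime_iff_eq hq hrp).mp (hq.dvd_of_dvd_pow hqd)
  exact hpq (h1.trans h2.symm)

/-- For a cyclic group `H` of order `p * q` (`p ≠ q` primes) generated by `h`,
the ideal `J` of `ℤ[H]` generated by `φ₁(h) · φ_p(h) · φ_q(h)` satisfies
`I_H · J = J`, where `I_H` is the augmentation ideal. -/
theorem augmentationIdeal_mul_cyclotomic_ideal_eq_self
    {p q : ℕ} (hp : p.Prime) (hq : q.Prime) (hpq : p ≠ q)
    {H : Type*} [CommGroup H] [Fintype H] (h : H)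
    (hgen : ∀ x : H, x ∈ Subgroup.zpowers h) (hcard : Fintype.card H = p * q) :
    RingHom.ker ((MonoidAlgebra.lift ℤ ℤ H) 1 : MonoidAlgebra ℤ H →ₐ[ℤ] ℤ) *
      Ideal.span {Polynomial.aeval (MonoidAlgebra.of ℤ H h)
        (Polynomial.cyclotomic 1 ℤ * Polynomial.cyclotomic p ℤ * Polynomial.cyclotomic q ℤ)}
    = Ideal.span {Polynomial.aeval (MonoidAlgebra.of ℤ H h)
        (Polynomial.cyclotomic 1 ℤ * Polynomial.cyclotomic p ℤ * Polynomial.cyclotomic q ℤ)} := by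
  set ε : MonoidAlgebra ℤ H →ₐ[ℤ] ℤ := (MonoidAlgebra.lift ℤ ℤ H) 1 with hε
  set x : MonoidAlgebra ℤ H := MonoidAlgebra.of ℤ H h with hx
  set g : MonoidAlgebra ℤ H :=
    Polynomial.aeval x (cyclotomic 1 ℤ * cyclotomic p ℤ * cyclotomic q ℤ) with hg
  refine le_antisymm Ideal.mul_le_right ?_
  rw [Ideal.span_le, Set.singleton_subset_iff]
  -- the key element u = 1 - φ_{pq}(x)
  set u : MonoidAlgebra ℤ H := 1 - Polynomial.aeval x (cyclotomic (p * q) ℤ) with hu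
  have hxpow : x ^ (p * q) = 1 := by
    rw [hx, ← map_pow, ← hcard, pow_card_eq_one, MonoidAlgebra.of_apply,
      MonoidAlgebra.one_def]
  have hker : u ∈ RingHom.ker (ε : MonoidAlgebra ℤ H →ₐ[ℤ] ℤ) := by
    have heval : ε (Polynomial.aeval x (cyclotomic (p * q) ℤ)) = 1 := by
      rw [hx, ← Polynomial.aeval_algHom_apply]
      have : ε (MonoidAlgebra.of ℤ H h) = 1 := by
        rw [hε]; simp [MonoidAlgebra.lift_apply]
      rw [this]
      have := eval_one_cyclotomic_not_prime_pow (R := ℤ) (n := p * q)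
        (fun {r} hr k hk => not_isPrimePow_mul hp hq hpq
          ⟨r, k, hr.prime, by
            rcases Nat.eq_zero_or_pos k with rfl | hk0
            · exfalso
              have := hp.two_le; have := hq.two_le
              simp at hk; nlinarith
            · exact hk0, hk⟩)
      simpa [Polynomial.aeval_def, Polynomial.eval₂_eq_eval_map] using this
    simp [RingHom.mem_ker, hu, map_sub, heval]
  have hug : u * g = g := by
    have hzero : Polynomial.aeval x (cyclotomic (p * q) ℤ) * g = 0 := by
      rw [hg, ← map_mul, mul_comm, cyclotomic_prod_pq hp hq hpq]
      simp [hxpow]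
    rw [hu, sub_mul, one_mul, hzero, sub_zero]
  have hmem : u * g ∈ RingHom.ker (ε : MonoidAlgebra ℤ H →ₐ[ℤ] ℤ) * Ideal.span {g} :=
    Ideal.mul_mem_mul hker (Ideal.subset_span rfl)
  rwa [hug] at hmem
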